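/- Let k, q, r be positive natural numbers with k > q, set k₁ = k − q. Let Ξ₁₁ ∈ ℝ^{k₁×r}, Ξ₁₂ ∈ ℝ^{k₁×q}, Ξ₂₁ ∈ ℝ^{q×r} be fixed, and for t ∈ ℝ let Ξ₂₂(t) ∈ ℝ^{q×q} be invertible with Ξ₂₂(t)^{-1} → 0 as t → ∞. Let B(t) = Ξ₂₂(t)^{-1}Ξ₂₁, O11(t) = (I_r + B(t)ᵀB(t))^{-1/2}, O22(t) = (I_q + B(t)B(t)ᵀ)^{-1/2}, and define Ξ̃₁₁(t) = (Ξ₁₁ − Ξ₁₂Ξ₂₂(t)^{-1}Ξ₂₁)·O11(t), Ξ̃₁₂(t) = (Ξ₁₁Ξ₂₁ᵀ(Ξ₂₂(t)^{-1})ᵀ + Ξ₁₂)·O22(t), Ξ̃₂₂(t) = (Ξ₂₁Ξ₂₁ᵀ(Ξ₂₂(t)^{-1})ᵀ + Ξ₂₂(t))·O22(t). Then, as t → ∞: O11(t) → I_r, O22(t) → I_q, Ξ̃₁₁(t) → Ξ₁₁, Ξ̃₁₂(t) → Ξ₁₂, and Ξ̃₂₂(t) − Ξ₂₂(t) → 0.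 -/

import Mathlib

open Matrix Filter

/-- Inverse of the unique symmetric positive semidefinite square root of a positive
(semi)definite real matrix (junk value `0` if `P` is not positive semidefinite). -/
noncomputable def invSqrt {n : Type*} [Fintype n] [DecidableEq n]
    (P : Matrix n n ℝ) : Matrix n n ℝ := by
  classical exact if h : P.PosSemidef then (h.1.eigenvectorUnitary.1 * diagonal ((↑) ∘ (√·) ∘ h.1.eigenvalues) *
    (star h.1.eigenvectorUnitary : Matrix n n ℝ))⁻¹ else 0

attribute [local instance] Matrix.normedAddCommGroup
set_option maxHeartbeats 1000000

section aux

variable {n : Type*} [Fintype n] [DecidableEq n]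

lemma aux_norm_mul_le {l m p : Type*} [Fintype l] [Fintype m] [Fintype p]
    (A : Matrix l m ℝ) (B : Matrix m p ℝ) :
    ‖A * B‖ ≤ (Fintype.card m : ℝ) * ‖A‖ * ‖B‖ := by
  rw [Matrix.norm_le_iff (by positivity)]
  intro i j
  rw [Matrix.mul_apply]
  calc ‖∑ k, A i k * B k j‖ ≤ ∑ k, ‖A i k * B k j‖ := norm_sum_le _ _
    _ ≤ ∑ _k : m, ‖A‖ * ‖B‖ := Finset.sum_le_sum fun k _ => by
        rw [norm_mul]
        exact mul_le_mul (A.norm_entry_le_entrywise_sup_norm)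
          (B.norm_entry_le_entrywise_sup_norm) (norm_nonneg _) (norm_nonneg _)
    _ = _ := by rw [Finset.sum_const, Finset.card_univ, nsmul_eq_mul]; ring

lemma aux_norm_conj_diag_le {U : Matrix n n ℝ} (hU : U * star U = 1) (d : n → ℝ) {c : ℝ}
    (hc : 0 ≤ c) (hd : ∀ k, |d k| ≤ c) : ‖U * diagonal d * star U‖ ≤ c := by
  have hrow : ∀ i, ∑ k, U i k ^ 2 = 1 := by
    intro i
    have h := congrFun (congrFun hU i) i
    simpa [Matrix.mul_apply, Matrix.one_apply, Matrix.star_eq_conjTranspose,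
      Matrix.conjTranspose_apply, sq] using h
  rw [Matrix.norm_le_iff hc]
  intro i j
  have he : (U * diagonal d * star U) i j = ∑ k, d k * (U i k * U j k) := by
    rw [Matrix.mul_apply]
    refine Finset.sum_congr rfl fun k _ => ?_
    rw [Matrix.mul_diagonal]
    simp only [Matrix.star_eq_conjTranspose, Matrix.conjTranspose_apply, star_trivial]
    ring
  rw [he, Real.norm_eq_abs]
  have h1 : |∑ k, d k * (U i k * U j k)| ≤ ∑ k, c * (|U i k| * |U j k|) := by
    refine (Finset.abs_sum_le_sum_abs _ _).trans (Finset.sum_le_sum fun k _ => ?_)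
    rw [abs_mul, abs_mul]
    exact mul_le_mul_of_nonneg_right (hd k) (mul_nonneg (abs_nonneg _) (abs_nonneg _))
  have h2 : ∑ k, |U i k| * |U j k| ≤ 1 := by
    have hcs := Finset.sum_mul_sq_le_sq_mul_sq Finset.univ (fun k => |U i k|) (fun k => |U j k|)
    have hi' : ∑ k, |U i k| ^ 2 = 1 := by simpa [sq_abs] using hrow i
    have hj' : ∑ k, |U j k| ^ 2 = 1 := by simpa [sq_abs] using hrow j
    rw [hi', hj', one_mul] at hcs
    have hnn : 0 ≤ ∑ k, |U i k| * |U j k| :=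
      Finset.sum_nonneg fun k _ => mul_nonneg (abs_nonneg _) (abs_nonneg _)
    nlinarith
  calc |∑ k, d k * (U i k * U j k)| ≤ ∑ k, c * (|U i k| * |U j k|) := h1
    _ = c * ∑ k, |U i k| * |U j k| := by rw [Finset.mul_sum]
    _ ≤ c * 1 := mul_le_mul_of_nonneg_left h2 hc
    _ = c := mul_one c

lemma invSqrt_key (M : Matrix n n ℝ) (hM : M.PosSemidef) :
    ∃ R : Matrix n n ℝ, invSqrt (1 + M) = 1 + M * R ∧ ‖R‖ ≤ 1 := by
  have hH : (1 + M).PosDef := Matrix.PosDef.one.add_posSemidef hM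
  have hHsd : (1 + M).PosSemidef := hH.posSemidef
  have herm : (1 + M).IsHermitian := hHsd.1
  set U : Matrix n n ℝ := (herm.eigenvectorUnitary : Matrix n n ℝ) with hUdef
  set μ : n → ℝ := herm.eigenvalues with hmu
  have hU1 : U * star U = 1 := Matrix.mem_unitaryGroup_iff.mp herm.eigenvectorUnitary.2
  have hU2 : star U * U = 1 := Matrix.mem_unitaryGroup_iff'.mp herm.eigenvectorUnitary.2
  have hspec : 1 + M = U * diagonal μ * star U := by
    have h := herm.spectral_theorem
    have h2 : (RCLike.ofReal ∘ herm.eigenvalues : n → ℝ) = μ := by funext k; simp [hmu]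
    rw [h2] at h
    exact h
  -- eigenvalues are at least 1
  have hμ1 : ∀ k, 1 ≤ μ k := by
    intro k
    set v : n → ℝ := ⇑(herm.eigenvectorBasis k) with hv
    have hv1 : (1 + M) *ᵥ v = μ k • v := herm.mulVec_eigenvectorBasis k
    have hMv : M *ᵥ v = (μ k - 1) • v := by
      rw [sub_smul, one_smul, ← hv1, Matrix.add_mulVec, Matrix.one_mulVec,
        add_sub_cancel_left]
    have hvnorm : star v ⬝ᵥ v = 1 := by
      have horth := herm.eigenvectorBasis.orthonormal.1 k
      rw [EuclideanSpace.norm_eq] at horth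
      have h2 : ∑ i, ‖(herm.eigenvectorBasis k) i‖ ^ 2 = 1 := by
        have := congrArg (· ^ 2) horth
        simpa [Real.sq_sqrt (Finset.sum_nonneg fun i _ => sq_nonneg _)] using this
      calc star v ⬝ᵥ v = ∑ i, v i * v i := rfl
        _ = ∑ i, ‖(herm.eigenvectorBasis k) i‖ ^ 2 := by
            refine Finset.sum_congr rfl fun i _ => ?_
            rw [Real.norm_eq_abs, sq_abs, sq]
        _ = 1 := h2
    have h0 := hM.dotProduct_mulVec_nonneg v
    rw [hMv, dotProduct_smul, smul_eq_mul, hvnorm, mul_one] at h0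
    linarith
  have hμpos : ∀ k, (0:ℝ) < μ k := fun k => lt_of_lt_of_le one_pos (hμ1 k)
  have hs1 : ∀ k, 1 ≤ Real.sqrt (μ k) := fun k => by
    rw [show (1:ℝ) = Real.sqrt 1 by simp]
    exact Real.sqrt_le_sqrt (hμ1 k)
  have hssq : ∀ k, Real.sqrt (μ k) ^ 2 = μ k := fun k => Real.sq_sqrt (hμpos k).le
  -- conjugation multiplication rule
  have hconj_mul : ∀ a b : n → ℝ, (U * diagonal a * star U) * (U * diagonal b * star U)
      = U * diagonal (fun k => a k * b k) * star U := by
    intro a b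
    calc (U * diagonal a * star U) * (U * diagonal b * star U)
        = U * (diagonal a * ((star U * U) * (diagonal b * star U))) := by
          simp only [Matrix.mul_assoc]
      _ = U * diagonal (fun k => a k * b k) * star U := by
          rw [hU2, Matrix.one_mul, ← Matrix.mul_assoc (diagonal a) (diagonal b) (star U),
            Matrix.diagonal_mul_diagonal, ← Matrix.mul_assoc]
  have hsqrt : (hHsd.1.eigenvectorUnitary.1 * diagonal ((↑) ∘ (√·) ∘ hHsd.1.eigenvalues) *
      (star hHsd.1.eigenvectorUnitary : Matrix n n ℝ)) = U * diagonal (fun k => Real.sqrt (μ k)) * star U := by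
    rfl
  set T : Matrix n n ℝ := U * diagonal (fun k => (Real.sqrt (μ k))⁻¹) * star U with hT
  have hTS : T * (hHsd.1.eigenvectorUnitary.1 * diagonal ((↑) ∘ (√·) ∘ hHsd.1.eigenvalues) *
      (star hHsd.1.eigenvectorUnitary : Matrix n n ℝ)) = 1 := by
    rw [hsqrt, hT, hconj_mul]
    have : (fun k => (Real.sqrt (μ k))⁻¹ * Real.sqrt (μ k)) = fun _ => (1:ℝ) := by
      funext k
      exact inv_mul_cancel₀ (by have := hs1 k; positivity)
    rw [this, Matrix.diagonal_one, Matrix.mul_one, hU1]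
  have hinv : invSqrt (1 + M) = T := by
    unfold invSqrt
    rw [dif_pos hHsd]
    exact Matrix.inv_eq_left_inv hTS
  have hM_eq : M = U * diagonal (fun k => μ k - 1) * star U := by
    have hd : diagonal (fun k => μ k - 1) = diagonal μ - 1 := by
      rw [← Matrix.diagonal_one, Matrix.diagonal_sub]
    rw [hd, Matrix.mul_sub, Matrix.mul_one, Matrix.sub_mul, hU1, ← hspec]
    abel
  set g : n → ℝ := fun k => if μ k = 1 then 0 else ((Real.sqrt (μ k))⁻¹ - 1) / (μ k - 1)
    with hg
  refine ⟨U * diagonal g * star U, ?_, ?_⟩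
  · rw [hinv, hM_eq, hconj_mul]
    have hgd : (fun k => (μ k - 1) * g k) = fun k => (Real.sqrt (μ k))⁻¹ - 1 := by
      funext k
      by_cases h : μ k = 1
      · simp [hg, h]
      · rw [hg]
        simp only [h, if_false]
        field_simp
    rw [hgd]
    have hd : diagonal (fun k => (Real.sqrt (μ k))⁻¹ - 1)
        = diagonal (fun k => (Real.sqrt (μ k))⁻¹) - 1 := by
      rw [← Matrix.diagonal_one, Matrix.diagonal_sub]
    rw [hd, Matrix.mul_sub, Matrix.mul_one, Matrix.sub_mul, hU1, hT]
    abel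
  · refine aux_norm_conj_diag_le hU1 g zero_le_one fun k => ?_
    by_cases h : μ k = 1
    · simp [hg, h]
    · have h1 : 1 < μ k := lt_of_le_of_ne (hμ1 k) (Ne.symm h)
      set s := Real.sqrt (μ k) with hsdef
      have hs : 1 ≤ s := hs1 k
      have hsq : s ^ 2 = μ k := hssq k
      rw [hg]
      simp only [h, if_false]
      rw [abs_div, abs_of_pos (by linarith : (0:ℝ) < μ k - 1), div_le_one (by linarith)]
      have hsinv : s⁻¹ ≤ 1 := by
        rw [inv_le_one_iff₀]; right; exact hs
      rw [abs_of_nonpos (by linarith : s⁻¹ - 1 ≤ 0), neg_sub]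
      have hspos : (0:ℝ) < s := by linarith
      have hinv' : s * s⁻¹ = 1 := mul_inv_cancel₀ (by positivity)
      have h3 : 0 ≤ (s - 1) * (s ^ 2 + s - 1) := mul_nonneg (by linarith) (by nlinarith)
      rw [← hsq]
      nlinarith [h3, hinv', hspos]

lemma tendsto_matrix_mul' {l m p : Type*} [Fintype l] [Fintype m] [Fintype p] {α : Type*}
    {F : Filter α} {f : α → Matrix l m ℝ} {g : α → Matrix m p ℝ} {A : Matrix l m ℝ}
    {B : Matrix m p ℝ} (hf : Tendsto f F (nhds A)) (hg : Tendsto g F (nhds B)) :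
    Tendsto (fun x => f x * g x) F (nhds (A * B)) :=
  ((continuous_fst.matrix_mul continuous_snd).tendsto (A, B)).comp (hf.prodMk_nhds hg)

lemma invSqrt_tendsto {α : Type*} {F : Filter α} {M : α → Matrix n n ℝ}
    (hpsd : ∀ t, (M t).PosSemidef) (hlim : Tendsto M F (nhds 0)) :
    Tendsto (fun t => invSqrt (1 + M t)) F (nhds 1) := by
  choose R hR hRn using fun t => invSqrt_key (M t) (hpsd t)
  have h0 : Tendsto (fun t => M t * R t) F (nhds 0) := by
    have hb : ∀ t, ‖M t * R t‖ ≤ (Fintype.card n : ℝ) * ‖M t‖ := fun t => by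
      calc ‖M t * R t‖ ≤ (Fintype.card n : ℝ) * ‖M t‖ * ‖R t‖ := aux_norm_mul_le _ _
        _ ≤ (Fintype.card n : ℝ) * ‖M t‖ * 1 :=
            mul_le_mul_of_nonneg_left (hRn t) (by positivity)
        _ = _ := mul_one _
    refine squeeze_zero_norm hb ?_
    have h := hlim.norm
    simpa using h.const_mul (Fintype.card n : ℝ)
  have h1 := (tendsto_const_nhds (x := (1 : Matrix n n ℝ)) (f := F)).add h0
  rw [add_zero] at h1
  exact h1.congr fun t => (hR t).symm

end aux

/-- limits of the blocks of `Ξ̃(t)` as `Ξ₂₂(t)⁻¹ → 0`, where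
`B(t) = Ξ₂₂(t)⁻¹Ξ₂₁`, `O11(t) = (I_r + B(t)ᵀB(t))^{-1/2}`, `O22(t) = (I_q + B(t)B(t)ᵀ)^{-1/2}`. -/
theorem stmt_6 (k q r : ℕ) (hq : 0 < q) (hr : 0 < r) (hk : q < k)
    (Ξ₁₁ : Matrix (Fin (k - q)) (Fin r) ℝ) (Ξ₁₂ : Matrix (Fin (k - q)) (Fin q) ℝ)
    (Ξ₂₁ : Matrix (Fin q) (Fin r) ℝ)
    (Ξ₂₂ : ℝ → Matrix (Fin q) (Fin q) ℝ)
    (hunit : ∀ t, IsUnit (Ξ₂₂ t))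
    (hlim : Tendsto (fun t => (Ξ₂₂ t)⁻¹) atTop (nhds (0 : Matrix (Fin q) (Fin q) ℝ))) :
    Tendsto (fun t => invSqrt (1 + ((Ξ₂₂ t)⁻¹ * Ξ₂₁)ᵀ * ((Ξ₂₂ t)⁻¹ * Ξ₂₁))) atTop
      (nhds (1 : Matrix (Fin r) (Fin r) ℝ)) ∧
    Tendsto (fun t => invSqrt (1 + ((Ξ₂₂ t)⁻¹ * Ξ₂₁) * ((Ξ₂₂ t)⁻¹ * Ξ₂₁)ᵀ)) atTop
      (nhds (1 : Matrix (Fin q) (Fin q) ℝ)) ∧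
    Tendsto (fun t => (Ξ₁₁ - Ξ₁₂ * (Ξ₂₂ t)⁻¹ * Ξ₂₁) *
        invSqrt (1 + ((Ξ₂₂ t)⁻¹ * Ξ₂₁)ᵀ * ((Ξ₂₂ t)⁻¹ * Ξ₂₁))) atTop (nhds Ξ₁₁) ∧
    Tendsto (fun t => (Ξ₁₁ * Ξ₂₁ᵀ * ((Ξ₂₂ t)⁻¹)ᵀ + Ξ₁₂) *
        invSqrt (1 + ((Ξ₂₂ t)⁻¹ * Ξ₂₁) * ((Ξ₂₂ t)⁻¹ * Ξ₂₁)ᵀ)) atTop (nhds Ξ₁₂) ∧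
    Tendsto (fun t => (Ξ₂₁ * Ξ₂₁ᵀ * ((Ξ₂₂ t)⁻¹)ᵀ + Ξ₂₂ t) *
        invSqrt (1 + ((Ξ₂₂ t)⁻¹ * Ξ₂₁) * ((Ξ₂₂ t)⁻¹ * Ξ₂₁)ᵀ) - Ξ₂₂ t) atTop
      (nhds (0 : Matrix (Fin q) (Fin q) ℝ)) := by
  have hdet : ∀ t, Ξ₂₂ t * (Ξ₂₂ t)⁻¹ = 1 := fun t =>
    Matrix.mul_nonsing_inv _ ((Matrix.isUnit_iff_isUnit_det _).mp (hunit t))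
  set B : ℝ → Matrix (Fin q) (Fin r) ℝ := fun t => (Ξ₂₂ t)⁻¹ * Ξ₂₁ with hBdef
  have hB : Tendsto B atTop (nhds 0) := by
    have h := tendsto_matrix_mul' hlim (tendsto_const_nhds (x := Ξ₂₁) (f := atTop))
    simpa using h
  have hBt : Tendsto (fun t => (B t)ᵀ) atTop (nhds 0) := by
    have h := ((continuous_id.matrix_transpose).tendsto (0 : Matrix (Fin q) (Fin r) ℝ)).comp hB
    simpa [Function.comp_def] using h
  have hinvT : Tendsto (fun t => ((Ξ₂₂ t)⁻¹)ᵀ) atTop (nhds 0) := by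
    have h := ((continuous_id.matrix_transpose).tendsto (0 : Matrix (Fin q) (Fin q) ℝ)).comp hlim
    simpa [Function.comp_def] using h
  have hM1psd : ∀ t, ((B t)ᵀ * B t).PosSemidef := fun t => by
    have h := Matrix.posSemidef_conjTranspose_mul_self (B t)
    rwa [Matrix.conjTranspose_eq_transpose_of_trivial] at h
  have hM2psd : ∀ t, (B t * (B t)ᵀ).PosSemidef := fun t => by
    have h := Matrix.posSemidef_self_mul_conjTranspose (B t)
    rwa [Matrix.conjTranspose_eq_transpose_of_trivial] at h
  have hM1 : Tendsto (fun t => (B t)ᵀ * B t) atTop (nhds 0) := by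
    simpa using tendsto_matrix_mul' hBt hB
  have hM2 : Tendsto (fun t => B t * (B t)ᵀ) atTop (nhds 0) := by
    simpa using tendsto_matrix_mul' hB hBt
  have hO11 : Tendsto (fun t => invSqrt (1 + (B t)ᵀ * B t)) atTop (nhds 1) :=
    invSqrt_tendsto hM1psd hM1
  have hO22 : Tendsto (fun t => invSqrt (1 + B t * (B t)ᵀ)) atTop (nhds 1) :=
    invSqrt_tendsto hM2psd hM2
  refine ⟨hO11, hO22, ?_, ?_, ?_⟩
  · have h1 : Tendsto (fun t => Ξ₁₁ - Ξ₁₂ * (Ξ₂₂ t)⁻¹ * Ξ₂₁) atTop (nhds Ξ₁₁) := by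
      have h2 := tendsto_matrix_mul'
        (tendsto_matrix_mul' (tendsto_const_nhds (x := Ξ₁₂) (f := atTop)) hlim)
        (tendsto_const_nhds (x := Ξ₂₁))
      have h3 := (tendsto_const_nhds (x := Ξ₁₁) (f := atTop)).sub h2
      simpa using h3
    have h4 := tendsto_matrix_mul' h1 hO11
    rw [Matrix.mul_one] at h4
    exact h4
  · have h1 : Tendsto (fun t => Ξ₁₁ * Ξ₂₁ᵀ * ((Ξ₂₂ t)⁻¹)ᵀ + Ξ₁₂) atTop (nhds Ξ₁₂) := by
      have h2 := (tendsto_matrix_mul'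
        (tendsto_const_nhds (x := Ξ₁₁ * Ξ₂₁ᵀ) (f := atTop)) hinvT).add
        (tendsto_const_nhds (x := Ξ₁₂))
      simpa using h2
    have h4 := tendsto_matrix_mul' h1 hO22
    rw [Matrix.mul_one] at h4
    exact h4
  · choose R hR hRn using fun t => invSqrt_key (B t * (B t)ᵀ) (hM2psd t)
    have hXB : ∀ t, Ξ₂₂ t * B t = Ξ₂₁ := fun t => by
      rw [hBdef]
      dsimp only
      rw [← Matrix.mul_assoc, hdet t, Matrix.one_mul]
    have key : ∀ t, (Ξ₂₁ * Ξ₂₁ᵀ * ((Ξ₂₂ t)⁻¹)ᵀ + Ξ₂₂ t) * invSqrt (1 + B t * (B t)ᵀ) - Ξ₂₂ t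
        = Ξ₂₁ * Ξ₂₁ᵀ * ((Ξ₂₂ t)⁻¹)ᵀ * invSqrt (1 + B t * (B t)ᵀ)
          + Ξ₂₁ * (B t)ᵀ * R t := by
      intro t
      have h1 : Ξ₂₂ t * (B t * (B t)ᵀ * R t) = Ξ₂₁ * (B t)ᵀ * R t := by
        rw [← Matrix.mul_assoc, ← Matrix.mul_assoc, hXB t]
      calc (Ξ₂₁ * Ξ₂₁ᵀ * ((Ξ₂₂ t)⁻¹)ᵀ + Ξ₂₂ t) * invSqrt (1 + B t * (B t)ᵀ) - Ξ₂₂ t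
          = Ξ₂₁ * Ξ₂₁ᵀ * ((Ξ₂₂ t)⁻¹)ᵀ * invSqrt (1 + B t * (B t)ᵀ)
            + Ξ₂₂ t * invSqrt (1 + B t * (B t)ᵀ) - Ξ₂₂ t := by rw [Matrix.add_mul]
        _ = Ξ₂₁ * Ξ₂₁ᵀ * ((Ξ₂₂ t)⁻¹)ᵀ * invSqrt (1 + B t * (B t)ᵀ)
            + (Ξ₂₂ t + Ξ₂₂ t * (B t * (B t)ᵀ * R t)) - Ξ₂₂ t := by
              rw [hR t, Matrix.mul_add, Matrix.mul_one, Matrix.mul_add, Matrix.mul_one]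
        _ = Ξ₂₁ * Ξ₂₁ᵀ * ((Ξ₂₂ t)⁻¹)ᵀ * invSqrt (1 + B t * (B t)ᵀ)
            + Ξ₂₂ t * (B t * (B t)ᵀ * R t) := by abel
        _ = _ := by rw [h1]
    have hX2 : Tendsto (fun t => Ξ₂₁ * Ξ₂₁ᵀ * ((Ξ₂₂ t)⁻¹)ᵀ * invSqrt (1 + B t * (B t)ᵀ))
        atTop (nhds 0) := by
      have h2 := tendsto_matrix_mul' (tendsto_matrix_mul'
        (tendsto_const_nhds (x := Ξ₂₁ * Ξ₂₁ᵀ) (f := atTop)) hinvT) hO22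
      simpa using h2
    have h2 : Tendsto (fun t => Ξ₂₁ * (B t)ᵀ * R t) atTop (nhds 0) := by
      have hb : ∀ t, ‖Ξ₂₁ * (B t)ᵀ * R t‖
          ≤ (Fintype.card (Fin q) : ℝ) * ‖Ξ₂₁ * (B t)ᵀ‖ := fun t => by
        calc ‖Ξ₂₁ * (B t)ᵀ * R t‖
            ≤ (Fintype.card (Fin q) : ℝ) * ‖Ξ₂₁ * (B t)ᵀ‖ * ‖R t‖ := aux_norm_mul_le _ _
          _ ≤ (Fintype.card (Fin q) : ℝ) * ‖Ξ₂₁ * (B t)ᵀ‖ * 1 :=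
              mul_le_mul_of_nonneg_left (hRn t) (by positivity)
          _ = _ := mul_one _
      refine squeeze_zero_norm hb ?_
      have hf : Tendsto (fun t => Ξ₂₁ * (B t)ᵀ) atTop (nhds 0) := by
        simpa using tendsto_matrix_mul' (tendsto_const_nhds (x := Ξ₂₁) (f := atTop)) hBt
      simpa using hf.norm.const_mul (Fintype.card (Fin q) : ℝ)
    have h3 := hX2.add h2
    rw [add_zero] at h3
    exact h3.congr fun t => (key t).symm
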